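/- Let u_1 ≥ ... ≥ u_{2N} ≥ 0, fix i < j − 1, let γ = min_{k ∈ {i,...,j−1}} (u_{2k} − u_{2k+2}) (assuming this is a lower bound on consecutive even-index gaps as in the proof), and suppose for all k ∈ {2i−1,...,2j−1} that u_k ≥ u_{2j} + (1/2)Δ_{2j-1,2j} + (1/2)∑_{l=⌈(k+1)/2⌉}^{j-1} γ. Then (2(j−i)+1) μ ≥ (j−i)/2 · Δ_{2j-1,2j} + Δ_{2i-1,2i} + ((j−i−1)²/2) γ, where μ = (1/(2(j−i)+1))(∑_{k=2i-1}^{2j-1} u_k − u_m − u_{m+1}) for any m, m+1 ∈ {2i,...,2j−1}. -/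
import Mathlib

lemma sumcard_aux (i : ℕ) (hi : 1 ≤ i) (n : ℕ) :
    ∑ k ∈ Finset.Icc (2*i) (2*(i+n) - 1), ((Finset.Icc (k/2+1) (i+n-1)).card : ℝ)
      = (n : ℝ) * ((n : ℝ) - 1) := by
  induction n with
  | zero => rw [Finset.Icc_eq_empty (by omega)]; simp
  | succ n ih =>
      have h1 : Finset.Icc (2*i) (2*(i+(n+1)) - 1)
          = insert (2*(i+n)+1) (insert (2*(i+n)) (Finset.Icc (2*i) (2*(i+n)-1))) := by
        ext k; simp only [Finset.mem_Icc, Finset.mem_insert]; omega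
      rw [h1, Finset.sum_insert (by simp only [Finset.mem_Icc, Finset.mem_insert]; omega),
          Finset.sum_insert (by simp only [Finset.mem_Icc]; omega)]
      have h2 : ((2*(i+n)+1)/2 + 1) = i+n+1 := by omega
      have h3 : ((2*(i+n))/2 + 1) = i+n+1 := by omega
      have h4 : i+(n+1)-1 = i+n := by omega
      rw [h2, h3, h4, Finset.Icc_eq_empty (by omega)]
      have h5 : ∀ k ∈ Finset.Icc (2*i) (2*(i+n)-1),
          ((Finset.Icc (k/2+1) (i+n)).card : ℝ)
            = ((Finset.Icc (k/2+1) (i+n-1)).card : ℝ) + 1 := by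
        intro k hk
        simp only [Finset.mem_Icc] at hk
        have : (Finset.Icc (k/2+1) (i+n)).card = (Finset.Icc (k/2+1) (i+n-1)).card + 1 := by
          rw [Nat.card_Icc, Nat.card_Icc]; omega
        rw [this]; push_cast; ring
      rw [Finset.sum_congr rfl h5, Finset.sum_add_distrib, ih, Finset.sum_const]
      have hcard : (Finset.Icc (2*i) (2*(i+n)-1)).card = 2*n := by
        rw [Nat.card_Icc]; omega
      rw [hcard]
      simp
      push_cast
      ring

set_option maxHeartbeats 1000000 in
theorem stmt_12 (N : ℕ) (u : ℕ → ℝ) (γ : ℝ)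
    (hmono : ∀ a b, 1 ≤ a → a ≤ b → b ≤ 2 * N → u b ≤ u a)
    (hnn : ∀ a, 1 ≤ a → a ≤ 2 * N → 0 ≤ u a)
    (i j : ℕ) (hi : 1 ≤ i) (hij : i + 1 < j) (hj : j ≤ N)
    (hγ : ∀ k, i ≤ k → k ≤ j - 1 → γ ≤ u (2 * k) - u (2 * k + 2))
    (hlow : ∀ k, 2 * i - 1 ≤ k → k ≤ 2 * j - 1 →
      u (2 * j) + (1 / 2) * (u (2 * j - 1) - u (2 * j)) +
        (1 / 2) * ∑ _l ∈ Finset.Icc ((k + 2) / 2) (j - 1), γ ≤ u k)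
    (m : ℕ) (hm1 : 2 * i ≤ m) (hm2 : m + 1 ≤ 2 * j - 1) :
    ((j : ℝ) - i) / 2 * (u (2 * j - 1) - u (2 * j)) +
        (u (2 * i - 1) - u (2 * i)) + (((j : ℝ) - i - 1) ^ 2 / 2) * γ ≤
      (2 * ((j : ℝ) - i) + 1) *
        ((1 / (2 * ((j : ℝ) - i) + 1)) *
          ((∑ k ∈ Finset.Icc (2 * i - 1) (2 * j - 1), u k) - u m - u (m + 1))) := by
  have hijR : (i:ℝ) + 2 ≤ (j:ℝ) := by exact_mod_cast (by omega : i + 2 ≤ j)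
  set X := (∑ k ∈ Finset.Icc (2 * i - 1) (2 * j - 1), u k) - u m - u (m + 1) with hXdef
  have hc : (2 * ((j:ℝ) - i) + 1) ≠ 0 := by nlinarith
  have hrw : (2 * ((j:ℝ) - i) + 1) * ((1 / (2 * ((j:ℝ) - i) + 1)) * X) = X := by
    field_simp
  rw [hrw]
  -- decompose the sum
  have hmem0 : (2*i-1) ∉ Finset.Icc (2*i) (2*j-1) := by
    simp only [Finset.mem_Icc]; omega
  have hsplit : Finset.Icc (2*i-1) (2*j-1) = insert (2*i-1) (Finset.Icc (2*i) (2*j-1)) := by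
    ext k; simp only [Finset.mem_Icc, Finset.mem_insert]; omega
  have hmm : m ∈ Finset.Icc (2*i) (2*j-1) := by simp only [Finset.mem_Icc]; omega
  have hmm1 : (m+1) ∈ (Finset.Icc (2*i) (2*j-1)).erase m := by
    simp only [Finset.mem_erase, Finset.mem_Icc]; omega
  set B := ((Finset.Icc (2*i) (2*j-1)).erase m).erase (m+1) with hBdef
  have hsum : X = u (2*i-1) + ∑ k ∈ B, u k := by
    rw [hXdef, hsplit, Finset.sum_insert hmem0,
        ← Finset.add_sum_erase _ u hmm, ← Finset.add_sum_erase _ u hmm1]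
    ring
  rw [hsum]
  have hΔ0 : 0 ≤ u (2*j-1) - u (2*j) := by
    have := hmono (2*j-1) (2*j) (by omega) (by omega) (by omega)
    linarith
  have hu2j0 : 0 ≤ u (2*j) := hnn (2*j) (by omega) (by omega)
  have hcardB : (B.card : ℝ) = 2*((j:ℝ)-i) - 2 := by
    have h1 : B.card + 2*i + 2 = 2*j := by
      rw [hBdef, Finset.card_erase_of_mem hmm1, Finset.card_erase_of_mem hmm, Nat.card_Icc]
      omega
    have h2 : ((B.card + 2*i + 2 : ℕ) : ℝ) = ((2*j : ℕ) : ℝ) := by rw [h1]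
    push_cast at h2
    linarith
  rcases le_or_gt γ 0 with hγ0 | hγ0
  · -- easy case: γ ≤ 0
    have hB1 : ∀ k ∈ B, u (2*j-1) ≤ u k := by
      intro k hk
      rw [hBdef] at hk
      simp only [Finset.mem_erase, Finset.mem_Icc] at hk
      exact hmono k (2*j-1) (by omega) (by omega) (by omega)
    have hSB : (B.card : ℝ) * u (2*j-1) ≤ ∑ k ∈ B, u k := by
      have := Finset.card_nsmul_le_sum B u (u (2*j-1)) hB1
      rwa [nsmul_eq_mul] at this
    have h2i : u (2*j-1) ≤ u (2*i) :=
      hmono (2*i) (2*j-1) (by omega) (by omega) (by omega)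
    rw [hcardB] at hSB
    nlinarith [sq_nonneg ((j:ℝ)-i-1), mul_nonneg (mul_self_nonneg ((j:ℝ)-i-1)) (neg_nonneg.2 hγ0)]
  · -- main case: γ > 0
    set c : ℕ → ℝ := fun k => ((Finset.Icc (k/2+1) (j-1)).card : ℝ) with hcdef
    have hLB : ∀ k, 2*i-1 ≤ k → k ≤ 2*j-1 →
        u (2*j) + (1/2) * (u (2*j-1) - u (2*j)) + (1/2) * (c k * γ) ≤ u k := by
      intro k h1 h2
      have h := hlow k h1 h2
      have e : (k+2)/2 = k/2+1 := by omega
      rw [e, Finset.sum_const, nsmul_eq_mul] at h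
      exact h
    -- sum over B of the lower bounds
    have hB1 : ∀ k ∈ B, u (2*j) + (1/2) * (u (2*j-1) - u (2*j)) + (1/2) * (c k * γ) ≤ u k := by
      intro k hk
      rw [hBdef] at hk
      simp only [Finset.mem_erase, Finset.mem_Icc] at hk
      exact hLB k (by omega) (by omega)
    have hSB : ∑ k ∈ B, (u (2*j) + (1/2) * (u (2*j-1) - u (2*j)) + (1/2) * (c k * γ))
        ≤ ∑ k ∈ B, u k := Finset.sum_le_sum hB1
    have hsplitB : ∑ k ∈ B, (u (2*j) + (1/2) * (u (2*j-1) - u (2*j)) + (1/2) * (c k * γ))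
        = (B.card : ℝ) * (u (2*j) + (1/2) * (u (2*j-1) - u (2*j)))
          + (1/2) * ((∑ k ∈ B, c k) * γ) := by
      rw [Finset.sum_add_distrib, Finset.sum_const, nsmul_eq_mul, Finset.sum_mul,
        Finset.mul_sum]
    -- full sum of c over Icc(2i, 2j-1)
    have hFull : ∑ k ∈ Finset.Icc (2*i) (2*j-1), c k
        = ((j:ℝ) - i) * (((j:ℝ) - i) - 1) := by
      have h := sumcard_aux i hi (j - i)
      rw [Nat.add_sub_cancel' (by omega : i ≤ j)] at h
      rw [hcdef]
      rw [h]
      have : ((j - i : ℕ) : ℝ) = (j:ℝ) - i := by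
        have := Nat.cast_sub (by omega : i ≤ j) (R := ℝ)
        push_cast at this ⊢
        linarith
      rw [this]
    have hSC : ∑ k ∈ B, c k = ((j:ℝ) - i) * (((j:ℝ) - i) - 1) - c m - c (m+1) := by
      have h1 := Finset.add_sum_erase _ c hmm
      have h2 := Finset.add_sum_erase _ c hmm1
      rw [hFull] at h1
      rw [hBdef]
      linarith
    -- bounds on individual c values
    have hbase : ((Finset.Icc (i+1) (j-1)).card : ℝ) = (j:ℝ) - i - 1 := by
      have h1 : (Finset.Icc (i+1) (j-1)).card + (i + 1) = j := by
        rw [Nat.card_Icc]; omega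
      have h2 : (((Finset.Icc (i+1) (j-1)).card + (i+1) : ℕ) : ℝ) = ((j:ℕ) : ℝ) := by
        rw [h1]
      push_cast at h2
      linarith
    have hcm : c m ≤ (j:ℝ) - i - 1 := by
      rw [hcdef, ← hbase]
      exact_mod_cast Nat.cast_le.2 (Finset.card_le_card
        (Finset.Icc_subset_Icc_left (by omega : i + 1 ≤ m/2 + 1)))
    have hcm1 : c (m+1) ≤ (j:ℝ) - i - 1 := by
      rw [hcdef, ← hbase]
      exact_mod_cast Nat.cast_le.2 (Finset.card_le_card
        (Finset.Icc_subset_Icc_left (by omega : i + 1 ≤ (m+1)/2 + 1)))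
    have hcI : c (2*i) = (j:ℝ) - i - 1 := by
      rw [hcdef]
      have : (2*i)/2 + 1 = i + 1 := by omega
      simp only [this]
      exact hbase
    -- lower bound for u (2i-1)
    have h2i1 : (u (2*i-1) - u (2*i)) +
        (u (2*j) + (1/2) * (u (2*j-1) - u (2*j)) + (1/2) * (c (2*i) * γ)) ≤ u (2*i-1) := by
      have := hLB (2*i) (by omega) (by omega)
      linarith
    rw [hsplitB] at hSB
    rw [hSC] at hSB
    rw [hcardB] at hSB
    rw [hcI] at h2i1
    have hcm0 : 0 ≤ c m := by rw [hcdef]; positivity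
    have hcm10 : 0 ≤ c (m+1) := by rw [hcdef]; positivity
    have p1 : 0 ≤ γ * ((j:ℝ) - i - 1 - c m) := mul_nonneg hγ0.le (by linarith)
    have p2 : 0 ≤ γ * ((j:ℝ) - i - 1 - c (m+1)) := mul_nonneg hγ0.le (by linarith)
    have p3 : 0 ≤ u (2*j) * (2*((j:ℝ)-i) - 1) := mul_nonneg hu2j0 (by linarith)
    have p4 : 0 ≤ (u (2*j-1) - u (2*j)) * ((j:ℝ) - i - 1) := mul_nonneg hΔ0 (by linarith)
    linarith [p1, p2, p3, p4, hSB, h2i1]
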